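/- arXiv:1202.3598 — 2 statements merged into one kernel-verified Lean document; each statement's English description precedes it below -/
import Mathlib

section
/- Let V be a real vector space, Ric, g, T ∈ V, a ≠ 0 real, and k, Λ, κ ∈ ℝ. Suppose the f(R) field equation a • Ric - (b/2) • g = κ • T holds together with the condition ((k/2 - Λ) * a - b/2) • g + (a - 1) * κ • T = 0. Then the Einstein equation Ric - (k/2) • g + Λ • g = κ • T holds. -/
theorem stmt_2 (V : Type*) [AddCommGroup V] [Module ℝ V]
    (Ric g T : V) (k Λ κ a b : ℝ) (ha : a ≠ 0)
    (hf : a • Ric - (b / 2) • g = κ • T)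
    (hcond : ((k / 2 - Λ) * a - b / 2) • g + ((a - 1) * κ) • T = 0) :
    Ric - (k / 2) • g + Λ • g = κ • T := by
  apply smul_right_injective V ha
  simp only [smul_sub, smul_add, smul_smul]
  have h1 : a • Ric = κ • T + (b / 2) • g := by rw [← hf]; abel
  rw [h1]
  linear_combination (norm := module) -hcond
end

section
/- Let V be a real vector space with a linear functional tr, and g, Ric, T ∈ V with tr g = 4, tr Ric = k. Suppose both the Einstein equation Ric - (k/2) • g + Λ • g = κ • T and the f(R) equation a • Ric - (b/2) • g = κ • T hold (a = f'(k), b = f(k)). Then k*a - 2*b + k - 4*Λ = 0. -/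
theorem stmt_6 (V : Type*) [AddCommGroup V] [Module ℝ V]
    (tr : V →ₗ[ℝ] ℝ) (g Ric T : V) (k Λ κ a b : ℝ)
    (htrg : tr g = 4) (htrR : tr Ric = k)
    (hE : Ric - (k / 2) • g + Λ • g = κ • T)
    (hf : a • Ric - (b / 2) • g = κ • T) :
    k * a - 2 * b + k - 4 * Λ = 0 := by
  have h1 := congrArg tr hE
  have h2 := congrArg tr hf
  simp [map_add, map_sub, map_smul, htrg, htrR] at h1 h2
  nlinarith [h1, h2]
end
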